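/- Under the MHR assumption, the function R*(t) = ∫_{λ(t)}^{q̄} α(q)g(q)dq is nondecreasing on T and strictly increasing on the set {t ∈ T : q̲ < λ(t) < q̄}. -/
import Mathlib


open MeasureTheory Set

theorem stmt_5
    (tlo thi qlo qhi : ℝ) (htT : tlo < thi) (hqQ : qlo < qhi)
    (F f d : ℝ → ℝ)
    (hF : ∀ t ∈ Icc tlo thi, HasDerivAt F (f t) t)
    (hfpos : ∀ t ∈ Icc tlo thi, 0 < f t)
    (hF0 : F tlo = 0) (hF1 : F thi = 1)
    (hdDef : ∀ t ∈ Icc tlo thi, d t = (1 - F t) / f t)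
    (d' : ℝ → ℝ)
    (hdDeriv : ∀ t ∈ Icc tlo thi, HasDerivAt d (d' t) t)
    (hMHR : ∀ t ∈ Icc tlo thi, d' t ≤ 0)
    (G g : ℝ → ℝ)
    (hG : ∀ q ∈ Icc qlo qhi, HasDerivAt G (g q) q)
    (hgpos : ∀ q ∈ Icc qlo qhi, 0 < g q)
    (hG0 : G qlo = 0) (hG1 : G qhi = 1)
    (hgint : IntervalIntegrable g volume qlo qhi)
    (α α' : ℝ → ℝ)
    (hα : ∀ q ∈ Icc qlo qhi, HasDerivAt α (α' q) q)
    (hαpos : ∀ q ∈ Icc qlo qhi, 0 < α q)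
    (hα'pos : ∀ q ∈ Icc qlo qhi, 0 < α' q)
    (r : ℝ) (hr : 0 < r)
    (hlow : α qlo * tlo < r) (hhigh : r < α qhi * thi)
    (η : ℝ → ℝ → ℝ)
    (hη : ∀ q t, η q t = α q * (t - d t) - r)
    (lam : ℝ → ℝ)
    (hlamQ : ∀ t ∈ Icc tlo thi, lam t ∈ Icc qlo qhi)
    (hlamLo : ∀ t ∈ Icc tlo thi, (∀ q ∈ Icc qlo qhi, 0 < η q t) → lam t = qlo)
    (hlamMid : ∀ t ∈ Icc tlo thi, ∀ q0 ∈ Icc qlo qhi, η q0 t = 0 → lam t = q0)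
    (hlamHi : ∀ t ∈ Icc tlo thi, (∀ q ∈ Icc qlo qhi, η q t < 0) → lam t = qhi)
    :
    MonotoneOn (fun t => ∫ q in lam t..qhi, α q * g q) (Icc tlo thi) ∧
      StrictMonoOn (fun t => ∫ q in lam t..qhi, α q * g q)
        {t | t ∈ Icc tlo thi ∧ qlo < lam t ∧ lam t < qhi} := by
  have hQle : qlo ≤ qhi := hqQ.le
  have huIcc : uIcc qlo qhi = Icc qlo qhi := uIcc_of_le hQle
  have hαcont : ContinuousOn α (Icc qlo qhi) := fun q hq =>
    ((hα q hq).continuousAt).continuousWithinAt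
  have hαg_int : IntervalIntegrable (fun q => α q * g q) volume qlo qhi :=
    hgint.continuousOn_mul (huIcc ▸ hαcont)
  -- α strictly monotone
  have hαmono : StrictMonoOn α (Icc qlo qhi) := by
    apply strictMonoOn_of_deriv_pos (convex_Icc _ _) hαcont
    intro x hx
    rw [interior_Icc] at hx
    rw [(hα x (Ioo_subset_Icc_self hx)).deriv]
    exact hα'pos x (Ioo_subset_Icc_self hx)
  -- φ = t - d t strictly monotone
  have hdcont : ContinuousOn d (Icc tlo thi) := fun t ht =>
    ((hdDeriv t ht).continuousAt).continuousWithinAt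
  have hφmono : StrictMonoOn (fun t => t - d t) (Icc tlo thi) := by
    have hc : ContinuousOn (fun t => t - d t) (Icc tlo thi) :=
      fun t ht => (continuousWithinAt_id.sub (hdcont t ht))
    apply strictMonoOn_of_deriv_pos (convex_Icc _ _) hc
    intro x hx
    rw [interior_Icc] at hx
    have hx' := Ioo_subset_Icc_self hx
    have h1 : HasDerivAt (fun t => t - d t) (1 - d' x) x :=
      (hasDerivAt_id x).sub (hdDeriv x hx')
    rw [h1.deriv]
    linarith [hMHR x hx']
  -- η increasing in t
  have hηt : ∀ q ∈ Icc qlo qhi, ∀ t1 ∈ Icc tlo thi, ∀ t2 ∈ Icc tlo thi,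
      t1 < t2 → η q t1 < η q t2 := by
    intro q hq t1 ht1 t2 ht2 h12
    rw [hη, hη]
    have hφ := hφmono ht1 ht2 h12
    simp only at hφ
    nlinarith [hαpos q hq]
  -- trichotomy via IVT
  have htri : ∀ t ∈ Icc tlo thi, (∃ q0 ∈ Icc qlo qhi, η q0 t = 0) ∨
      (∀ q ∈ Icc qlo qhi, 0 < η q t) ∨ (∀ q ∈ Icc qlo qhi, η q t < 0) := by
    intro t ht
    by_cases h : ∃ q0 ∈ Icc qlo qhi, η q0 t = 0
    · exact Or.inl h
    · push_neg at h
      have hηcont : ContinuousOn (fun q => η q t) (Icc qlo qhi) := by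
        have he : (fun q => η q t) = fun q => α q * (t - d t) - r := by
          funext q; exact hη q t
        rw [he]
        exact (hαcont.mul continuousOn_const).sub continuousOn_const
      have hivt : ∀ a ∈ Icc qlo qhi, ∀ b ∈ Icc qlo qhi, η a t < 0 → 0 < η b t → False := by
        intro a ha b hb hna hpb
        have hsub : uIcc a b ⊆ Icc qlo qhi := by
          rw [← huIcc]
          exact uIcc_subset_uIcc (huIcc ▸ ha) (huIcc ▸ hb)
        have := intermediate_value_uIcc (hηcont.mono hsub)
        have h0 : (0:ℝ) ∈ uIcc (η a t) (η b t) := by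
          rw [Set.mem_uIcc]; left; exact ⟨hna.le, hpb.le⟩
        obtain ⟨q0, hq0, hq0z⟩ := this h0
        exact (h q0 (hsub hq0)) hq0z
      rcases lt_or_gt_of_ne (h qlo (left_mem_Icc.mpr hQle)) with hneg | hpos2
      · right; right
        intro q hq
        rcases lt_or_gt_of_ne (h q hq) with h' | h'
        · exact h'
        · exact absurd (hivt qlo (left_mem_Icc.mpr hQle) q hq hneg h') (fun hf => hf)
      · right; left
        intro q hq
        rcases lt_or_gt_of_ne (h q hq) with h' | h'
        · exact absurd (hivt q hq qlo (left_mem_Icc.mpr hQle) h' hpos2) (fun hf => hf)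
        · exact h'
  -- in the interior case, η (lam t) t = 0 and t - d t > 0
  have hint : ∀ t ∈ Icc tlo thi, qlo < lam t → lam t < qhi →
      η (lam t) t = 0 ∧ 0 < t - d t := by
    intro t ht hlo hhi
    rcases htri t ht with ⟨q0, hq0, hq0z⟩ | hall | hall
    · have hle : lam t = q0 := hlamMid t ht q0 hq0 hq0z
      have hz : η (lam t) t = 0 := by rw [hle]; exact hq0z
      refine ⟨hz, ?_⟩
      have he := hη (lam t) t
      rw [hz] at he
      nlinarith [hαpos (lam t) (hlamQ t ht)]
    · have := hlamLo t ht hall; exact absurd this (by linarith)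
    · have := hlamHi t ht hall; exact absurd this (by linarith)
  -- lam is nonincreasing
  have hlmono : ∀ t1 ∈ Icc tlo thi, ∀ t2 ∈ Icc tlo thi, t1 < t2 → lam t2 ≤ lam t1 := by
    intro t1 ht1 t2 ht2 h12
    by_contra hcon
    push_neg at hcon
    have hl1 := hlamQ t1 ht1
    have hl2 := hlamQ t2 ht2
    have h1hi : lam t1 < qhi := lt_of_lt_of_le hcon hl2.2
    have h2lo : qlo < lam t2 := lt_of_le_of_lt hl1.1 hcon
    rcases htri t2 ht2 with ⟨q0, hq0, hq0z⟩ | hall | hall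
    · have hl2e : lam t2 = q0 := hlamMid t2 ht2 q0 hq0 hq0z
      have hz2 : η (lam t2) t2 = 0 := by rw [hl2e]; exact hq0z
      have hneg : η (lam t2) t1 < 0 := by
        have := hηt (lam t2) hl2 t1 ht1 t2 ht2 h12
        linarith
      rcases htri t1 ht1 with ⟨q1, hq1, hq1z⟩ | hall1 | hall1
      · have hl1e : lam t1 = q1 := hlamMid t1 ht1 q1 hq1 hq1z
        have hz1 : η (lam t1) t1 = 0 := by rw [hl1e]; exact hq1z
        have hpos1 : 0 < t1 - d t1 := by
          have he := hη (lam t1) t1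
          rw [hz1] at he
          nlinarith [hαpos (lam t1) hl1]
        have hlt : η (lam t1) t1 < η (lam t2) t1 := by
          rw [hη, hη]
          have := hαmono hl1 hl2 hcon
          nlinarith
        linarith
      · exact absurd hneg (not_lt.mpr (hall1 (lam t2) hl2).le)
      · have := hlamHi t1 ht1 hall1; linarith
    · have := hlamLo t2 ht2 hall; linarith
    · have : lam t1 = qhi := hlamHi t1 ht1
        (fun q hq => lt_trans (hηt q hq t1 ht1 t2 ht2 h12) (hall q hq))
      linarith
  -- lam strictly decreasing on interior
  have hlstrict : ∀ t1 ∈ Icc tlo thi, ∀ t2 ∈ Icc tlo thi, t1 < t2 →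
      qlo < lam t1 → lam t1 < qhi → qlo < lam t2 → lam t2 < qhi → lam t2 < lam t1 := by
    intro t1 ht1 t2 ht2 h12 h1a h1b h2a h2b
    obtain ⟨hz1, hpos1⟩ := hint t1 ht1 h1a h1b
    obtain ⟨hz2, _⟩ := hint t2 ht2 h2a h2b
    have hneg : η (lam t2) t1 < 0 := by
      have := hηt (lam t2) (hlamQ t2 ht2) t1 ht1 t2 ht2 h12
      linarith
    rcases lt_or_ge (lam t2) (lam t1) with h | h
    · exact h
    · exfalso
      rcases h.eq_or_lt with heq | hlt
      · rw [heq] at hz1; linarith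
      · have := hαmono (hlamQ t1 ht1) (hlamQ t2 ht2) hlt
        rw [hη] at hneg hz1
        nlinarith
  -- integral comparison
  have hIle : ∀ a ∈ Icc qlo qhi, ∀ b ∈ Icc qlo qhi, b ≤ a →
      (∫ q in a..qhi, α q * g q) ≤ ∫ q in b..qhi, α q * g q := by
    intro a ha b hb hba
    have hi1 : IntervalIntegrable (fun q => α q * g q) volume b a := by
      apply hαg_int.mono_set
      rw [huIcc, uIcc_of_le hba]
      exact Icc_subset_Icc hb.1 ha.2
    have hi2 : IntervalIntegrable (fun q => α q * g q) volume a qhi := by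
      apply hαg_int.mono_set
      rw [huIcc, uIcc_of_le ha.2]
      exact Icc_subset_Icc ha.1 le_rfl
    have hsplit := intervalIntegral.integral_add_adjacent_intervals hi1 hi2
    have hnn : 0 ≤ ∫ q in b..a, α q * g q := by
      apply intervalIntegral.integral_nonneg hba
      intro u hu
      have huQ : u ∈ Icc qlo qhi := ⟨le_trans hb.1 hu.1, le_trans hu.2 ha.2⟩
      exact (mul_pos (hαpos u huQ) (hgpos u huQ)).le
    linarith
  have hIlt : ∀ a ∈ Icc qlo qhi, ∀ b ∈ Icc qlo qhi, b < a →
      (∫ q in a..qhi, α q * g q) < ∫ q in b..qhi, α q * g q := by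
    intro a ha b hb hba
    have hi1 : IntervalIntegrable (fun q => α q * g q) volume b a := by
      apply hαg_int.mono_set
      rw [huIcc, uIcc_of_le hba.le]
      exact Icc_subset_Icc hb.1 ha.2
    have hi2 : IntervalIntegrable (fun q => α q * g q) volume a qhi := by
      apply hαg_int.mono_set
      rw [huIcc, uIcc_of_le ha.2]
      exact Icc_subset_Icc ha.1 le_rfl
    have hsplit := intervalIntegral.integral_add_adjacent_intervals hi1 hi2
    have hpos : 0 < ∫ q in b..a, α q * g q := by
      apply intervalIntegral.intervalIntegral_pos_of_pos_on hi1 _ hba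
      intro u hu
      have huQ : u ∈ Icc qlo qhi := ⟨le_trans hb.1 hu.1.le, le_trans hu.2.le ha.2⟩
      exact mul_pos (hαpos u huQ) (hgpos u huQ)
    linarith
  constructor
  · intro t1 ht1 t2 ht2 h12
    rcases h12.eq_or_lt with rfl | h
    · exact le_refl _
    · exact hIle (lam t1) (hlamQ t1 ht1) (lam t2) (hlamQ t2 ht2)
        (hlmono t1 ht1 t2 ht2 h)
  · intro t1 ht1 t2 ht2 h12
    obtain ⟨ht1S, h1a, h1b⟩ := ht1
    obtain ⟨ht2S, h2a, h2b⟩ := ht2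
    exact hIlt (lam t1) (hlamQ t1 ht1S) (lam t2) (hlamQ t2 ht2S)
      (hlstrict t1 ht1S t2 ht2S h12 h1a h1b h2a h2b)
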